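/- For all p, ω ∈ ℂ, the families (I_{exp(p/2^m)}(ω))_{m≥1} and (I_{exp(ω/2^m)}(p))_{m≥1} are multipliable and ∏_{m=1}^∞ I_{exp(p/2^m)}(ω) = ∏_{m=1}^∞ I_{exp(ω/2^m)}(p), where exp denotes the complex exponential. -/

import Mathlib

/-- For `p, ω ∈ ℂ`, the entire function
`I_p(ω) = ∏_{n=1}^∞ (p + (1-p) e^{ω/2^n})` (index `n : ℕ` stands for `n+1 ≥ 1`). -/
noncomputable def Iprod (p ω : ℂ) : ℂ :=
  ∏' n : ℕ, (p + (1 - p) * Complex.exp (ω / 2 ^ (n + 1)))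

open Complex Filter Topology

/-- The double-indexed family underlying the iterated products. -/
noncomputable def Fdouble (p ω : ℂ) (x : ℕ × ℕ) : ℂ :=
  1 - (Complex.exp (p / 2 ^ (x.1 + 1)) - 1) * (Complex.exp (ω / 2 ^ (x.2 + 1)) - 1)

lemma aux_summable (z : ℂ) :
    Summable (fun n : ℕ => ‖Complex.exp (z / 2 ^ (n + 1)) - 1‖) := by
  have hgeo : Summable (fun n : ℕ => ‖z‖ * (1 / 2 : ℝ) ^ n) :=
    summable_geometric_two.mul_left ‖z‖
  refine hgeo.of_norm_bounded_eventually ?_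
  rw [Nat.cofinite_eq_atTop]
  filter_upwards [Filter.eventually_ge_atTop (Nat.ceil ‖z‖)] with n hn
  have hle : ‖z / 2 ^ (n + 1)‖ ≤ 1 := by
    rw [norm_div, norm_pow]
    have h2 : ‖(2 : ℂ)‖ = (2 : ℝ) := by simp
    rw [h2, div_le_one (by positivity)]
    calc ‖z‖ ≤ (Nat.ceil ‖z‖ : ℝ) := Nat.le_ceil _
      _ ≤ (n : ℝ) := by exact_mod_cast hn
      _ ≤ 2 ^ (n + 1) := by
          calc (n : ℝ) ≤ 2 ^ n := by exact_mod_cast Nat.le_of_lt Nat.lt_two_pow_self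
            _ ≤ 2 ^ (n + 1) := by
                apply pow_le_pow_right₀ (by norm_num) (Nat.le_succ n)
  have key : ‖Complex.exp (z / 2 ^ (n + 1)) - 1‖ ≤ 2 * ‖z / 2 ^ (n + 1)‖ :=
    Complex.norm_exp_sub_one_le hle
  have h2 : ‖z / 2 ^ (n + 1)‖ = ‖z‖ * (1 / 2 : ℝ) ^ (n + 1) := by
    rw [norm_div, norm_pow]
    have : ‖(2 : ℂ)‖ = (2 : ℝ) := by simp
    rw [this]
    field_simp
    rw [mul_assoc, ← mul_pow]; norm_num
  rw [Real.norm_of_nonneg (norm_nonneg _)]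
  calc ‖Complex.exp (z / 2 ^ (n + 1)) - 1‖ ≤ 2 * ‖z / 2 ^ (n + 1)‖ := key
    _ = 2 * (‖z‖ * (1 / 2 : ℝ) ^ (n + 1)) := by rw [h2]
    _ = ‖z‖ * (1 / 2 : ℝ) ^ n := by ring

/-- A family of complex numbers whose distance to `1` is summable is multipliable. -/
lemma multipliable_of_summable_norm_sub_one {ι : Type*} {f : ι → ℂ}
    (h : Summable fun i => ‖f i - 1‖) : Multipliable f := by
  by_cases hz : ∃ i, f i = 0
  · obtain ⟨i0, hi0⟩ := hz
    refine ⟨0, ?_⟩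
    have : ∀ᶠ s : Finset ι in atTop, (0 : ℂ) = ∏ i ∈ s, f i := by
      filter_upwards [Filter.eventually_ge_atTop ({i0} : Finset ι)] with s hs
      exact (Finset.prod_eq_zero (hs (Finset.mem_singleton_self i0)) hi0).symm
    exact Filter.Tendsto.congr' this tendsto_const_nhds
  · push_neg at hz
    have hlog : Summable fun i => Complex.log (f i) := by
      have htend : Tendsto (fun i => ‖f i - 1‖) cofinite (𝓝 0) :=
        h.tendsto_cofinite_zero
      have hev : ∀ᶠ i in cofinite, ‖f i - 1‖ < 1 / 2 :=
        htend.eventually (gt_mem_nhds (by norm_num : (0 : ℝ) < 1 / 2))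
    -- compare with (3/2) ‖f i - 1‖
      refine (h.mul_left (3 / 2)).of_norm_bounded_eventually ?_
      filter_upwards [hev] with i hi
      have : Complex.log (f i) = Complex.log (1 + (f i - 1)) := by ring_nf
      rw [this]
      exact Complex.norm_log_one_add_half_le_self (le_of_lt hi)
    exact Complex.multipliable_of_summable_log hlog

lemma Fdouble_summable (p ω : ℂ) :
    Summable fun x : ℕ × ℕ => ‖Fdouble p ω x - 1‖ := by
  have := ((aux_summable p).mul_of_nonneg (aux_summable ω)
    (fun _ => norm_nonneg _) (fun _ => norm_nonneg _))
  refine this.congr fun x => ?_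
  simp only [Fdouble]
  rw [show (1 : ℂ) - (Complex.exp (p / 2 ^ (x.1 + 1)) - 1) *
      (Complex.exp (ω / 2 ^ (x.2 + 1)) - 1) - 1
      = -((Complex.exp (p / 2 ^ (x.1 + 1)) - 1) *
        (Complex.exp (ω / 2 ^ (x.2 + 1)) - 1)) by ring]
  rw [norm_neg, norm_mul]

lemma Fdouble_multipliable (p ω : ℂ) : Multipliable (Fdouble p ω) :=
  multipliable_of_summable_norm_sub_one (Fdouble_summable p ω)

lemma Fdouble_fiber_multipliable (p ω : ℂ) (m : ℕ) :
    Multipliable fun n => Fdouble p ω (m, n) :=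
  multipliable_of_summable_norm_sub_one ((Fdouble_summable p ω).prod_factor m)

lemma Iprod_eq_fiber (p ω : ℂ) (m : ℕ) :
    Iprod (Complex.exp (p / 2 ^ (m + 1))) ω = ∏' n, Fdouble p ω (m, n) := by
  unfold Iprod Fdouble
  exact tprod_congr fun n => by ring

lemma key_mult (p ω : ℂ) :
    Multipliable (fun m : ℕ => Iprod (Complex.exp (p / 2 ^ (m + 1))) ω) := by
  have := ((Fdouble_multipliable p ω).hasProd.prod_fiberwise
    (fun m => (Fdouble_fiber_multipliable p ω m).hasProd)).multipliable
  exact this.congr fun m => (Iprod_eq_fiber p ω m).symm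

lemma key_eq (p ω : ℂ) :
    ∏' m : ℕ, Iprod (Complex.exp (p / 2 ^ (m + 1))) ω = ∏' x, Fdouble p ω x := by
  calc ∏' m : ℕ, Iprod (Complex.exp (p / 2 ^ (m + 1))) ω
      = ∏' (m : ℕ) (n : ℕ), Fdouble p ω (m, n) := tprod_congr (Iprod_eq_fiber p ω)
    _ = ∏' x, Fdouble p ω x :=
        (Multipliable.tprod_prod' (Fdouble_multipliable p ω) (Fdouble_fiber_multipliable p ω)).symm

/-- For all `p, ω ∈ ℂ`, the families `(I_{exp(p/2^m)}(ω))_{m ≥ 1}` and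
`(I_{exp(ω/2^m)}(p))_{m ≥ 1}` are multipliable and
`∏_{m=1}^∞ I_{exp(p/2^m)}(ω) = ∏_{m=1}^∞ I_{exp(ω/2^m)}(p)`
(index `m : ℕ` stands for `m+1 ≥ 1`). -/
theorem stmt11 (p ω : ℂ) :
    Multipliable (fun m : ℕ => Iprod (Complex.exp (p / 2 ^ (m + 1))) ω) ∧
      Multipliable (fun m : ℕ => Iprod (Complex.exp (ω / 2 ^ (m + 1))) p) ∧
        ∏' m : ℕ, Iprod (Complex.exp (p / 2 ^ (m + 1))) ω =
          ∏' m : ℕ, Iprod (Complex.exp (ω / 2 ^ (m + 1))) p := by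
  refine ⟨key_mult p ω, key_mult ω p, ?_⟩
  rw [key_eq p ω, key_eq ω p]
  have hswap : ∀ x : ℕ × ℕ, Fdouble ω p x = Fdouble p ω ((Equiv.prodComm ℕ ℕ) x) := by
    intro x
    simp only [Fdouble, Equiv.prodComm_apply, Prod.fst_swap, Prod.snd_swap]
    ring
  rw [tprod_congr hswap]
  exact ((Equiv.prodComm ℕ ℕ).tprod_eq (Fdouble p ω)).symm
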